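/- Let $1 < p < \infty$ and $\tau = (t_j)_{j=1}^N$ be a finite increasing sequence. Let $u \in L^\infty_t L^2_x$ be right continuous with $u(t) \to 0$ in $L^2$ as $t \to -\infty$, and define the step function $u_\tau = \sum_{j=1}^N \mathbb{1}_{[t_j, t_{j+1})} u(t_j)$ (with $t_{N+1} = \infty$). Then, with $t_0 = -\infty$, $\|u - u_\tau\|_{\widetilde{U}^p_{dis}} \leq 4 (\sum_{j=0}^N \|u\|_{\widetilde{U}^p_{dis}(t_j, t_{j+1})}^p)^{1/p}$. -/

import Mathlib

open MeasureTheory ENNReal Filter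

noncomputable section

/-- The space `L²(ℝⁿ; ℂ)`. -/
abbrev Hsp (n : ℕ) : Type :=
  MeasureTheory.Lp ℂ 2 (volume : Measure (EuclideanSpace ℝ (Fin n)))

namespace DP

variable {n : ℕ}

/-- The homogeneous `p`-variation seminorm of `v : ℝ → L²(ℝⁿ)`, as a supremum over all
finite increasing sequences (partitions). -/
def pVar (p : ℝ) (v : ℝ → Hsp n) : ℝ≥0∞ :=
  ⨆ (N : ℕ) (t : Fin (N + 1) → ℝ) (_ : StrictMono t),
    (∑ j : Fin N, (‖v (t j.succ) - v (t j.castSucc)‖₊ : ℝ≥0∞) ^ p) ^ (1 / p)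

/-- The `L^∞_t L^2_x` norm of `v : ℝ → L²(ℝⁿ)`. -/
def supNorm (v : ℝ → Hsp n) : ℝ≥0∞ := ⨆ t : ℝ, (‖v t‖₊ : ℝ≥0∞)

/-- The `V^p` norm `‖v‖_{V^p} = ‖v‖_{L^∞_t L^2_x} + |v|_{V^p}`. -/
def VpNorm (p : ℝ) (v : ℝ → Hsp n) : ℝ≥0∞ := supNorm v + pVar p v

/-- The step function with partition points `t 0 < t 1 < ... < t N`, taking the value
`f j` on `[t j, t (j+1))` and `f N` on `[t N, ∞)` (and `0` on `(-∞, t 0)`). -/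
def stepFun (N : ℕ) (t : Fin (N + 1) → ℝ) (f : Fin (N + 1) → Hsp n) : ℝ → Hsp n := fun s =>
  (∑ j : Fin N,
      Set.indicator (Set.Ico (t j.castSucc) (t j.succ)) (fun _ => f j.castSucc) s)
    + Set.indicator (Set.Ici (t (Fin.last N))) (fun _ => f (Fin.last N)) s

/-- A `U^p` atom: a step function whose values are `ℓ^p`-normalised in `L²`. -/
def IsUpAtom (p : ℝ) (u : ℝ → Hsp n) : Prop :=
  ∃ (N : ℕ) (t : Fin (N + 1) → ℝ) (f : Fin (N + 1) → Hsp n),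
    StrictMono t ∧ u = stepFun N t f ∧ (∑ j, ‖f j‖ ^ p) ^ (1 / p) = 1

/-- The atomic `U^p` norm: the infimum of `∑ |c j|` over all representations
`u = ∑ c j • (a j)` as an absolutely convergent sum of `U^p` atoms. -/
def UpNorm (p : ℝ) (u : ℝ → Hsp n) : ℝ≥0∞ :=
  ⨅ (c : ℕ → ℝ) (a : ℕ → ℝ → Hsp n) (_ : ∀ j, IsUpAtom p (a j))
    (_ : Summable fun j => |c j|)
    (_ : ∀ s : ℝ, HasSum (fun j => c j • a j s) (u s)),
    ENNReal.ofReal (∑' j, |c j|)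

end DP

namespace DP

/-- The discrete dual pairing `B(w, u)` associated with the partition points `t 0 < ... < t N`:
`B(w,u) = ⟨w(t₀), u(t₀)⟩ + ∑_{j≥1} ⟨w(t_j) - w(t_{j-1}), u(t_j)⟩`. -/
def Bpair {n : ℕ} (N : ℕ) (t : Fin (N + 1) → ℝ) (w u : ℝ → Hsp n) : ℂ :=
  (inner ℂ (w (t 0)) (u (t 0)) : ℂ) +
    ∑ j : Fin N, (inner ℂ (w (t j.succ) - w (t j.castSucc)) (u (t j.succ)) : ℂ)

/-- The discrete weak `U^p` norm `‖u‖_{Ũ^p_{dis}}`: the supremum of `|B(w,u)|` over all step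
functions `w` with `|w|_{V^q} ≤ 1`. -/
def UdisNorm {n : ℕ} (q : ℝ) (u : ℝ → Hsp n) : ℝ≥0∞ :=
  ⨆ (N : ℕ) (t : Fin (N + 1) → ℝ) (_ : StrictMono t) (f : Fin (N + 1) → Hsp n)
    (_ : pVar q (stepFun N t f) ≤ 1),
    (‖Bpair N t (stepFun N t f) u‖₊ : ℝ≥0∞)

/-- The localised discrete weak `U^p` norm `‖u‖_{Ũ^p_{dis}(a,b)}`, the supremum being restricted
to compactly supported step functions supported in the interval `(a, b) ⊆ [-∞, ∞]`. -/
def UdisNormLoc {n : ℕ} (q : ℝ) (a b : EReal) (u : ℝ → Hsp n) : ℝ≥0∞ :=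
  ⨆ (N : ℕ) (t : Fin (N + 1) → ℝ) (_ : StrictMono t) (f : Fin (N + 1) → Hsp n)
    (_ : ∀ s : ℝ, ¬(a < (s : EReal) ∧ (s : EReal) < b) → stepFun N t f s = 0)
    (_ : pVar q (stepFun N t f) ≤ 1),
    (‖Bpair N t (stepFun N t f) u‖₊ : ℝ≥0∞)

end DP




namespace Aux

variable {E : Type*} [NormedAddCommGroup E]

/-- partition square-sum over a list of points -/
def LS (q : ℝ) (W : ℝ → E) : List ℝ → ℝ≥0∞
  | x :: y :: l => (‖W y - W x‖₊ : ℝ≥0∞) ^ q + LS q W (y :: l)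
  | _ => 0

@[simp] lemma LS_nil (q : ℝ) (W : ℝ → E) : LS q W [] = 0 := rfl
@[simp] lemma LS_single (q : ℝ) (W : ℝ → E) (x : ℝ) : LS q W [x] = 0 := rfl
lemma LS_cons_cons (q : ℝ) (W : ℝ → E) (x y : ℝ) (l : List ℝ) :
    LS q W (x :: y :: l) = (‖W y - W x‖₊ : ℝ≥0∞) ^ q + LS q W (y :: l) := rfl

lemma LS_pair (q : ℝ) (W : ℝ → E) (x y : ℝ) :
    LS q W [x, y] = (‖W y - W x‖₊ : ℝ≥0∞) ^ q := by
  rw [LS_cons_cons, LS_single, add_zero]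

lemma LS_append (q : ℝ) (W : ℝ → E) (a : ℝ) :
    ∀ l₁ l₂ : List ℝ, LS q W (l₁ ++ a :: l₂) = LS q W (l₁ ++ [a]) + LS q W (a :: l₂)
  | [], l₂ => by simp
  | [x], l₂ => by simp [LS_cons_cons, LS_pair]
  | x :: y :: l₁, l₂ => by
      have := LS_append q W a (y :: l₁) l₂
      simp only [List.cons_append] at *
      rw [LS_cons_cons, this, LS_cons_cons, add_assoc]

lemma LS_le_append_singleton (q : ℝ) (W : ℝ → E) (a : ℝ) :
    ∀ l : List ℝ, LS q W l ≤ LS q W (l ++ [a])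
  | [] => zero_le
  | [x] => zero_le
  | x :: y :: l => by
      simp only [List.cons_append]
      rw [LS_cons_cons, LS_cons_cons]
      exact add_le_add_right (LS_le_append_singleton q W a (y :: l)) _

lemma LS_add_LS_le_append (q : ℝ) (W : ℝ → E) (l₁ l₂ : List ℝ) :
    LS q W l₁ + LS q W l₂ ≤ LS q W (l₁ ++ l₂) := by
  cases l₂ with
  | nil => simpa using le_refl (LS q W l₁)
  | cons c l₂' =>
      rw [LS_append q W c l₁ l₂']
      exact add_le_add_left (LS_le_append_singleton q W c l₁) _

lemma LS_eq_zero_of_const (q : ℝ) (hq : 0 < q) (W : ℝ → E) (c : E) :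
    ∀ l : List ℝ, (∀ x ∈ l, W x = c) → LS q W l = 0
  | [], _ => rfl
  | [x], _ => rfl
  | x :: y :: l, h => by
      rw [LS_cons_cons, h y (by simp), h x (by simp), sub_self, nnnorm_zero,
        ENNReal.coe_zero, ENNReal.zero_rpow_of_pos hq, zero_add]
      exact LS_eq_zero_of_const q hq W c (y :: l) (fun z hz => h z (by simp [hz]))

lemma LS_comp (q : ℝ) (W : ℝ → E) (P : ℝ → ℝ) (c : E) (w' : ℝ → E) :
    ∀ l : List ℝ, (∀ x ∈ l, w' x = W (P x) - c) → LS q w' l = LS q W (l.map P)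
  | [], _ => rfl
  | [x], _ => rfl
  | x :: y :: l, h => by
      simp only [List.map_cons]
      rw [LS_cons_cons, LS_cons_cons, h x (by simp), h y (by simp),
        sub_sub_sub_cancel_right]
      congr 1
      have := LS_comp q W P c w' (y :: l) (fun z hz => h z (by simp [hz]))
      simpa using this

lemma LS_smul {F : Type*} [NormedAddCommGroup F] [NormedSpace ℝ F]
    (q : ℝ) (hq : 0 ≤ q) (W : ℝ → F) (r : ℝ) :
    ∀ l : List ℝ, LS q (fun x => r • W x) l = ((‖r‖₊ : ℝ≥0∞)) ^ q * LS q W l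
  | [] => by simp
  | [x] => by simp
  | x :: y :: l => by
      rw [LS_cons_cons, LS_cons_cons, mul_add, ← LS_smul q hq W r (y :: l)]
      congr 1
      rw [← smul_sub, nnnorm_smul, ENNReal.coe_mul, ENNReal.mul_rpow_of_nonneg _ _ hq]

lemma LS_dedup (q : ℝ) (hq : 0 < q) (W : ℝ → E) :
    ∀ l : List ℝ, l.IsChain (· ≤ ·) →
      ∃ l' : List ℝ, l'.IsChain (· < ·) ∧ LS q W l = LS q W l' ∧ l'.head? = l.head?
  | [], _ => ⟨[], by simp⟩
  | [x], _ => ⟨[x], by simp⟩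
  | x :: y :: l, h => by
      have hxy : x ≤ y := (List.isChain_cons_cons.1 h).1
      have hc : (y :: l).IsChain (· ≤ ·) := (List.isChain_cons_cons.1 h).2
      obtain ⟨l', h1, h2, h3⟩ := LS_dedup q hq W (y :: l) hc
      rcases eq_or_lt_of_le hxy with heq | hlt
      · refine ⟨l', h1, ?_, ?_⟩
        · rw [LS_cons_cons, heq, sub_self, nnnorm_zero, ENNReal.coe_zero,
            ENNReal.zero_rpow_of_pos hq, zero_add, h2]
        · rw [h3]; simp [heq]
      · obtain ⟨z, r', rfl⟩ : ∃ z r', l' = z :: r' := by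
          cases l' with
          | nil => simp at h3
          | cons z r' => exact ⟨z, r', rfl⟩
        have hz : z = y := by simpa using h3
        subst hz
        refine ⟨x :: z :: r', List.isChain_cons_cons.2 ⟨hlt, h1⟩, ?_, by simp⟩
        rw [LS_cons_cons, LS_cons_cons, h2]

/-- supremum of partition sums over all nondecreasing lists -/
def MSfull (q : ℝ) (W : ℝ → E) : ℝ≥0∞ :=
  ⨆ l : {l : List ℝ // l.IsChain (· ≤ ·)}, LS q W l.1

/-- supremum of partition sums over nondecreasing lists inside `[a,b]` -/
def MS (q : ℝ) (W : ℝ → E) (a b : ℝ) : ℝ≥0∞ :=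
  ⨆ l : {l : List ℝ // l.IsChain (· ≤ ·) ∧ ∀ x ∈ l, x ∈ Set.Icc a b}, LS q W l.1

lemma le_MS (q : ℝ) (W : ℝ → E) (a b : ℝ) (l : List ℝ) (h1 : l.IsChain (· ≤ ·))
    (h2 : ∀ x ∈ l, x ∈ Set.Icc a b) : LS q W l ≤ MS q W a b :=
  le_iSup (fun l : {l : List ℝ // l.IsChain (· ≤ ·) ∧ ∀ x ∈ l, x ∈ Set.Icc a b} =>
    LS q W l.1) ⟨l, h1, h2⟩

lemma MS_le_MSfull (q : ℝ) (W : ℝ → E) (a b : ℝ) : MS q W a b ≤ MSfull q W :=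
  iSup_le fun l => le_iSup (fun l : {l : List ℝ // l.IsChain (· ≤ ·)} => LS q W l.1) ⟨l.1, l.2.1⟩

lemma MSfull_le (q : ℝ) (hq : 0 < q) (W : ℝ → E) (C : ℝ≥0∞)
    (h : ∀ l : List ℝ, l.IsChain (· < ·) → LS q W l ≤ C) : MSfull q W ≤ C := by
  refine iSup_le fun l => ?_
  obtain ⟨l', h1, h2, -⟩ := LS_dedup q hq W l.1 l.2
  rw [h2]; exact h l' h1

lemma MS_superadd (q : ℝ) (W : ℝ → E) {a b a' b' : ℝ}
    (hab : a ≤ b) (hba : b ≤ a') (hab' : a' ≤ b') :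
    MS q W a b + MS q W a' b' ≤ MS q W a b' := by
  have hne : Nonempty {l : List ℝ // l.IsChain (· ≤ ·) ∧ ∀ x ∈ l, x ∈ Set.Icc a b} :=
    ⟨⟨[], by simp, by simp⟩⟩
  have hne' : Nonempty {l : List ℝ // l.IsChain (· ≤ ·) ∧ ∀ x ∈ l, x ∈ Set.Icc a' b'} :=
    ⟨⟨[], by simp, by simp⟩⟩
  rw [MS, MS, ENNReal.iSup_add]
  refine iSup_le fun l₁ => ?_
  rw [ENNReal.add_iSup]
  refine iSup_le fun l₂ => ?_
  refine le_trans (LS_add_LS_le_append q W l₁.1 l₂.1) (le_MS q W a b' _ ?_ ?_)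
  · rw [List.isChain_append]
    refine ⟨l₁.2.1, l₂.2.1, fun x hx y hy => ?_⟩
    have hx' : x ∈ l₁.1 := List.mem_of_mem_getLast? hx
    have hy' : y ∈ l₂.1 := List.mem_of_mem_head? hy
    exact le_trans ((l₁.2.2 x hx').2) (le_trans hba (l₂.2.2 y hy').1)
  · intro x hx
    rcases List.mem_append.1 hx with h | h
    · exact ⟨(l₁.2.2 x h).1, le_trans (l₁.2.2 x h).2 (le_trans hba hab')⟩
    · exact ⟨le_trans (hab.trans hba) (l₂.2.2 x h).1, (l₂.2.2 x h).2⟩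

lemma sum_MS_le (q : ℝ) (W : ℝ → E) (nn : ℕ) (a b : ℕ → ℝ)
    (hab : ∀ i, i < nn → a i ≤ b i) (hba : ∀ i, i + 1 < nn → b i ≤ a (i + 1)) :
    ∑ i ∈ Finset.range nn, MS q W (a i) (b i) ≤ MSfull q W := by
  have key : ∀ k, 0 < k → k ≤ nn →
      ∑ i ∈ Finset.range k, MS q W (a i) (b i) ≤ MS q W (a 0) (b (k - 1)) := by
    intro k
    induction k with
    | zero => omega
    | succ k ih =>
        intro _ hk
        rcases Nat.eq_zero_or_pos k with rfl | hkpos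
        · simp
        · rw [Finset.sum_range_succ]
          refine le_trans (add_le_add_left (ih hkpos (by omega)) _) ?_
          have h1 : a 0 ≤ b (k - 1) := by
            clear ih
            have : ∀ j, j < nn → a 0 ≤ b j := by
              intro j
              induction j with
              | zero => intro h; exact hab 0 h
              | succ j ihj =>
                  intro h
                  exact le_trans (ihj (by omega)) (le_trans (hba j (by omega))
                    (hab (j+1) h))
            exact this (k-1) (by omega)
          have h2 : b (k - 1) ≤ a k := by
            have := hba (k-1) (by omega)
            simpa [Nat.sub_add_cancel hkpos] using this
          simpa using MS_superadd q W h1 h2 (hab k (by omega))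
  rcases Nat.eq_zero_or_pos nn with rfl | hnn
  · simp
  · exact le_trans (key nn hnn le_rfl) (MS_le_MSfull q W _ _)

lemma LS_ofFn (q : ℝ) (W : ℝ → E) :
    ∀ (M : ℕ) (σ : Fin (M + 1) → ℝ),
      LS q W (List.ofFn σ) = ∑ j : Fin M, (‖W (σ j.succ) - W (σ j.castSucc)‖₊ : ℝ≥0∞) ^ q
  | 0, σ => by simp [List.ofFn_succ]
  | (M + 1), σ => by
      have ih := LS_ofFn q W M (fun i => σ i.succ)
      simp only [List.ofFn_succ] at ih ⊢
      rw [LS_cons_cons, ih, Fin.sum_univ_succ]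
      try congr 1
      try exact Finset.sum_congr rfl fun j _ => by rw [Fin.succ_castSucc]

lemma chain'_lt_ofFn {M : ℕ} {σ : Fin (M + 1) → ℝ} (h : StrictMono σ) :
    (List.ofFn σ).IsChain (· < ·) := by
  rw [List.isChain_iff_getElem]
  intro i hi
  simp only [List.length_ofFn] at hi
  simp only [List.getElem_ofFn]
  apply h
  simp [Fin.lt_def]

end Aux

namespace DP

variable {n : ℕ}

lemma stepFun_apply_lt {m : ℕ} {τ : Fin (m + 1) → ℝ} (hτ : Monotone τ)
    (h : Fin (m + 1) → Hsp n) {x : ℝ} (hx : x < τ 0) : stepFun m τ h x = 0 := by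
  unfold stepFun
  rw [Finset.sum_eq_zero, Set.indicator_of_notMem, add_zero]
  · exact not_le.2 (lt_of_lt_of_le hx (hτ (Fin.zero_le _)))
  · intro j _
    apply Set.indicator_of_notMem
    intro hmem
    rw [Set.mem_Ico] at hmem
    exact absurd (lt_of_lt_of_le hx (hτ (Fin.zero_le _))) (not_lt.2 hmem.1)

lemma stepFun_apply_mem {m : ℕ} {τ : Fin (m + 1) → ℝ} (hτ : StrictMono τ)
    (h : Fin (m + 1) → Hsp n) (j : Fin m) {x : ℝ}
    (hx1 : τ j.castSucc ≤ x) (hx2 : x < τ j.succ) :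
    stepFun m τ h x = h j.castSucc := by
  unfold stepFun
  rw [Set.indicator_of_notMem, add_zero, Finset.sum_eq_single j]
  · exact Set.indicator_of_mem (Set.mem_Ico.2 ⟨hx1, hx2⟩) _
  · intro j' _ hj'
    apply Set.indicator_of_notMem
    intro hmem
    rw [Set.mem_Ico] at hmem
    obtain ⟨hb1, hb2⟩ := hmem
    rcases lt_or_gt_of_ne hj' with hlt | hgt
    · have : τ j'.succ ≤ τ j.castSucc := hτ.monotone (Fin.succ_le_castSucc_iff.2 hlt)
      exact absurd (lt_of_lt_of_le hb2 (this.trans hx1)) (lt_irrefl x)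
    · have : τ j.succ ≤ τ j'.castSucc := hτ.monotone (Fin.succ_le_castSucc_iff.2 hgt)
      exact absurd (lt_of_lt_of_le hx2 (this.trans hb1)) (lt_irrefl x)
  · intro hj; exact absurd (Finset.mem_univ j) hj
  · intro hmem
    rw [Set.mem_Ici] at hmem
    exact absurd (lt_of_lt_of_le hx2 (hτ.monotone (Fin.le_last j.succ))) (not_lt.2 hmem)

lemma stepFun_apply_last {m : ℕ} {τ : Fin (m + 1) → ℝ} (hτ : Monotone τ)
    (h : Fin (m + 1) → Hsp n) {x : ℝ} (hx : τ (Fin.last m) ≤ x) :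
    stepFun m τ h x = h (Fin.last m) := by
  unfold stepFun
  rw [Finset.sum_eq_zero, Set.indicator_of_mem (Set.mem_Ici.2 hx), zero_add]
  intro j _
  apply Set.indicator_of_notMem
  intro hmem
  rw [Set.mem_Ico] at hmem
  exact absurd (lt_of_lt_of_le hmem.2 ((hτ (Fin.le_last j.succ)).trans hx)) (lt_irrefl x)

lemma stepFun_locate {m : ℕ} {τ : Fin (m + 1) → ℝ} (hτ : StrictMono τ)
    (h : Fin (m + 1) → Hsp n) {x : ℝ} (hx : τ 0 ≤ x) :
    ∃ j, τ j ≤ x ∧ (∀ j', τ j' ≤ x → j' ≤ j) ∧ stepFun m τ h x = h j := by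
  classical
  have hne : (Finset.univ.filter (fun j : Fin (m+1) => τ j ≤ x)).Nonempty := ⟨0, by simp [hx]⟩
  set j := (Finset.univ.filter (fun j : Fin (m+1) => τ j ≤ x)).max' hne with hj
  have hjx : τ j ≤ x := by
    have h2 := Finset.max'_mem _ hne
    rw [Finset.mem_filter] at h2
    exact h2.2
  have hmax : ∀ j', τ j' ≤ x → j' ≤ j := fun j' hj' =>
    Finset.le_max' _ j' (by simp [hj'])
  refine ⟨j, hjx, hmax, ?_⟩
  by_cases hlast : j = Fin.last m
  · rw [stepFun_apply_last hτ.monotone h (hlast ▸ hjx), hlast]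
  · obtain ⟨j0, hj0⟩ := Fin.exists_castSucc_eq.2 hlast
    have hx2 : x < τ j0.succ := by
      by_contra hcon
      have := hmax j0.succ (not_lt.1 hcon)
      rw [← hj0] at this
      exact absurd (lt_of_le_of_lt this (Fin.castSucc_lt_succ (i := j0))) (lt_irrefl _)
    rw [← hj0] at hjx ⊢
    exact stepFun_apply_mem hτ h j0 hjx hx2

lemma stepFun_self {m : ℕ} {τ : Fin (m + 1) → ℝ} (hτ : StrictMono τ)
    (h : Fin (m + 1) → Hsp n) (j : Fin (m + 1)) : stepFun m τ h (τ j) = h j := by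
  by_cases hlast : j = Fin.last m
  · subst hlast; exact stepFun_apply_last hτ.monotone h le_rfl
  · obtain ⟨j0, rfl⟩ := Fin.exists_castSucc_eq.2 hlast
    exact stepFun_apply_mem hτ h j0 le_rfl (hτ (Fin.castSucc_lt_succ (i := j0)))

lemma stepFun_smul {m : ℕ} (τ : Fin (m + 1) → ℝ) (h : Fin (m + 1) → Hsp n) (r : ℝ) :
    stepFun m τ (r • h) = fun x => r • stepFun m τ h x := by
  funext x
  unfold stepFun
  rw [smul_add, Finset.smul_sum]
  congr 1
  · refine Finset.sum_congr rfl fun j _ => ?_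
    simp [Set.indicator_apply, Pi.smul_apply, apply_ite (fun z : Hsp n => r • z)]
  · simp [Set.indicator_apply, Pi.smul_apply, apply_ite (fun z : Hsp n => r • z)]

lemma Bpair_smul {m : ℕ} (τ : Fin (m + 1) → ℝ) (w u : ℝ → Hsp n) (r : ℝ) :
    Bpair m τ (fun x => r • w x) u = (r : ℂ) * Bpair m τ w u := by
  unfold Bpair
  rw [mul_add, Finset.mul_sum]
  congr 1
  · rw [show (fun x => r • w x) (τ 0) = (r : ℂ) • w (τ 0) from RCLike.real_smul_eq_coe_smul (K := ℂ) r _,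
      inner_smul_left, Complex.conj_ofReal]
  · refine Finset.sum_congr rfl fun j _ => ?_
    rw [show (fun x => r • w x) (τ j.succ) - (fun x => r • w x) (τ j.castSucc)
        = (r : ℂ) • (w (τ j.succ) - w (τ j.castSucc)) by
        rw [← smul_sub]; exact RCLike.real_smul_eq_coe_smul (K := ℂ) r _,
      inner_smul_left, Complex.conj_ofReal]

end DP

namespace Aux

variable {E : Type*} [NormedAddCommGroup E]

lemma LS_le_zeros (q : ℝ) (hq : 0 < q) (w' : ℝ → E) (c : ℝ) :
    ∀ l₁ : List ℝ, (∀ x ∈ l₁, w' x = 0) → LS q w' (l₁ ++ [c]) ≤ (‖w' c‖₊ : ℝ≥0∞) ^ q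
  | [], _ => by simp
  | [x], h => by
      simp only [List.cons_append, List.nil_append]
      rw [LS_pair, h x (by simp), sub_zero]
  | x :: y :: l₁, h => by
      simp only [List.cons_append] at *
      rw [LS_cons_cons, h x (by simp), h y (by simp), sub_self, nnnorm_zero,
        ENNReal.coe_zero, ENNReal.zero_rpow_of_pos hq, zero_add]
      exact LS_le_zeros q hq w' c (y :: l₁) (fun z hz => h z (by simp [hz]))

lemma dropWhile_head_false {α : Type*} (p : α → Bool) :
    ∀ (l : List α) (c : α) (l' : List α), l.dropWhile p = c :: l' → p c = false
  | [], c, l', h => by simp at h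
  | x :: t, c, l', h => by
      rw [List.dropWhile_cons] at h
      by_cases hx : p x = true
      · rw [if_pos hx] at h; exact dropWhile_head_false p t c l' h
      · rw [if_neg hx] at h
        cases h
        simpa using hx

lemma dcl_eq_range (S : Finset ℕ) (h : ∀ k' ∈ S, ∀ k, k ≤ k' → k ∈ S) :
    S = Finset.range S.card := by
  ext x
  simp only [Finset.mem_range]
  constructor
  · intro hx
    have h1 : Finset.Iic x ⊆ S := fun k hk => h x hx k (Finset.mem_Iic.1 hk)
    have h2 := Finset.card_le_card h1
    rw [Nat.card_Iic] at h2; omega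
  · intro hx
    by_contra hxS
    have h2 : S ⊆ Finset.range x := by
      intro k hk
      rw [Finset.mem_range]
      by_contra hkx
      exact hxS (h k hk x (by omega))
    have h3 := Finset.card_le_card h2
    rw [Finset.card_range] at h3; omega

end Aux

namespace DP

open Aux

variable {n : ℕ}

lemma LS_stepFun_le (q : ℝ) (hq : 0 < q) (W : ℝ → Hsp n) {m : ℕ}
    (τ ρ : Fin (m + 1) → ℝ) (hτ : StrictMono τ) (hρ : Monotone ρ)
    (l : List ℝ) (hl : l.IsChain (· ≤ ·)) :
    LS q (stepFun m τ (fun j => W (ρ j) - W (ρ (Fin.last m)))) l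
      ≤ 2 * MS q W (ρ 0) (ρ (Fin.last m)) := by
  classical
  set h : Fin (m + 1) → Hsp n := fun j => W (ρ j) - W (ρ (Fin.last m)) with hh
  set w' : ℝ → Hsp n := stepFun m τ h with hw'
  set bb : ℝ := ρ (Fin.last m) with hbb
  have h0b : ρ 0 ≤ bb := hρ (Fin.zero_le _)
  have hloc : ∀ x : ℝ, τ 0 ≤ x → ∃ j, τ j ≤ x ∧ (∀ j', τ j' ≤ x → j' ≤ j) ∧ w' x = h j :=
    fun x hx => stepFun_locate hτ h hx
  choose J hJ1 hJ2 hJ3 using hloc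
  set P : ℝ → ℝ := fun x => if hx : τ 0 ≤ x then ρ (J x hx) else bb with hP
  have hwP : ∀ x, w' x = W (P x) - W bb := by
    intro x
    by_cases hx : τ 0 ≤ x
    · rw [hP]; simp only [dif_pos hx]
      rw [hJ3 x hx, hh]
    · rw [hP]; simp only [dif_neg hx]
      rw [hw', stepFun_apply_lt hτ.monotone h (not_le.1 hx), sub_self]
  have hPmono : ∀ x y, τ 0 ≤ x → x ≤ y → P x ≤ P y := by
    intro x y hx hxy
    have hy : τ 0 ≤ y := hx.trans hxy
    rw [hP]; simp only [dif_pos hx, dif_pos hy]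
    exact hρ (hJ2 y hy (J x hx) ((hJ1 x hx).trans hxy))
  have hPmem : ∀ x, P x ∈ Set.Icc (ρ 0) bb := by
    intro x
    rw [hP]
    by_cases hx : τ 0 ≤ x
    · simp only [dif_pos hx]
      exact ⟨hρ (Fin.zero_le _), hρ (Fin.le_last _)⟩
    · simp only [dif_neg hx]
      exact ⟨h0b, le_rfl⟩
  set pb : ℝ → Bool := fun x => decide (x < τ 0) with hpb
  have hsplit : l.takeWhile pb ++ l.dropWhile pb = l := List.takeWhile_append_dropWhile
  have hl₁0 : ∀ x ∈ l.takeWhile pb, w' x = 0 := by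
    intro x hx
    have := List.mem_takeWhile_imp hx
    rw [hpb] at this
    exact stepFun_apply_lt hτ.monotone h (of_decide_eq_true this)
  rcases hdrop : l.dropWhile pb with _ | ⟨c, l₂'⟩
  · -- everything below τ 0
    conv_lhs => rw [← hsplit, hdrop]
    rw [List.append_nil, LS_eq_zero_of_const q hq w' 0 _ hl₁0]
    exact zero_le
  · have hc0 : τ 0 ≤ c := by
      have := dropWhile_head_false pb l c l₂' hdrop
      rw [hpb] at this
      exact not_lt.1 (of_decide_eq_false this)
    have hpairl : l.Pairwise (· ≤ ·) := List.isChain_iff_pairwise.1 hl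
    have hpair₂ : (c :: l₂').Pairwise (· ≤ ·) := by
      rw [← hdrop]
      exact List.Pairwise.sublist (List.dropWhile_sublist pb) hpairl
    have hge : ∀ x ∈ c :: l₂', τ 0 ≤ x := by
      intro x hx
      rcases List.mem_cons.1 hx with rfl | hx'
      · exact hc0
      · exact hc0.trans ((List.pairwise_cons.1 hpair₂).1 x hx')
    have hLSsplit : LS q w' l = LS q w' (l.takeWhile pb ++ [c]) + LS q w' (c :: l₂') := by
      conv_lhs => rw [← hsplit, hdrop]
      exact LS_append q w' c _ _
    rw [hLSsplit, two_mul]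
    apply add_le_add
    · refine le_trans (LS_le_zeros q hq w' c _ hl₁0) ?_
      have hval : (‖w' c‖₊ : ℝ≥0∞) ^ q = LS q W [P c, bb] := by
        rw [LS_pair, hwP c, ← neg_sub (W (P c)) (W bb), nnnorm_neg]
      rw [hval]
      refine le_MS q W _ _ _ (List.isChain_pair.2 (hPmem c).2) ?_
      intro x hx
      rcases List.mem_cons.1 hx with rfl | hx'
      · exact hPmem c
      · rcases List.mem_singleton.1 hx' with rfl
        exact ⟨h0b, le_rfl⟩
    · rw [LS_comp q W P (W bb) w' (c :: l₂') (fun x _ => hwP x)]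
      refine le_MS q W _ _ _ ?_ ?_
      · rw [List.isChain_map]
        refine List.Pairwise.isChain ?_
        refine hpair₂.imp_of_mem ?_
        intro a b ha _ hab
        exact hPmono a b (hge a ha) hab
      · intro x hx
        obtain ⟨y, -, rfl⟩ := List.mem_map.1 hx
        exact hPmem y

lemma pVar_le_of_LS (q : ℝ) (hq : 0 < q) (w : ℝ → Hsp n) (C : ℝ≥0∞)
    (h : ∀ l : List ℝ, l.IsChain (· < ·) → LS q w l ≤ C) : pVar q w ≤ C ^ (1 / q) := by
  rw [pVar]
  refine iSup_le fun M => iSup_le fun σ => iSup_le fun hσ => ?_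
  refine ENNReal.rpow_le_rpow ?_ (by positivity)
  rw [← LS_ofFn]
  exact h _ (chain'_lt_ofFn hσ)

lemma LS_le_of_pVar (q : ℝ) (hq : 0 < q) (w : ℝ → Hsp n) (hpv : pVar q w ≤ 1) :
    ∀ l : List ℝ, l.IsChain (· < ·) → LS q w l ≤ 1 := by
  have hfin : ∀ (M : ℕ) (σ : Fin (M + 1) → ℝ), StrictMono σ →
      (∑ j : Fin M, (‖w (σ j.succ) - w (σ j.castSucc)‖₊ : ℝ≥0∞) ^ q) ≤ 1 := by
    intro M σ hσ
    have h1 : (∑ j : Fin M, (‖w (σ j.succ) - w (σ j.castSucc)‖₊ : ℝ≥0∞) ^ q) ^ (1 / q)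
        ≤ 1 := by
      refine le_trans ?_ hpv
      rw [pVar]
      exact le_iSup_of_le M (le_iSup_of_le σ (le_iSup_of_le hσ le_rfl))
    have h2 := ENNReal.rpow_le_rpow h1 hq.le
    rwa [← ENNReal.rpow_mul, one_div_mul_cancel (ne_of_gt hq), ENNReal.rpow_one,
      ENNReal.one_rpow] at h2
  intro l hl
  match l with
  | [] => exact zero_le
  | [x] => exact zero_le
  | x :: y :: r =>
      have hlen : (x :: y :: r).length = r.length + 1 + 1 := by simp
      set σ : Fin (r.length + 1 + 1) → ℝ :=
        fun i => (x :: y :: r).get (Fin.cast hlen.symm i) with hσdef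
      have hofn : List.ofFn σ = x :: y :: r := by
        refine List.ext_get (by simp) ?_
        intro i h1 h2
        rw [List.get_ofFn]
        rfl
      have hstrict : StrictMono σ := by
        intro i j hij
        have hp := List.isChain_iff_pairwise.1 hl
        refine List.pairwise_iff_get.1 hp _ _ ?_
        rw [Fin.lt_def] at hij ⊢
        simpa using hij
      calc LS q w (x :: y :: r) = LS q w (List.ofFn σ) := by rw [hofn]
        _ = ∑ j : Fin (r.length + 1), (‖w (σ j.succ) - w (σ j.castSucc)‖₊ : ℝ≥0∞) ^ q :=
            LS_ofFn q w _ σ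
        _ ≤ 1 := hfin _ σ hstrict

lemma sum_d_telescope (g : ℕ → Hsp n) (A : ℕ) :
    ∀ (B : ℕ), A ≤ B →
      ∑ k ∈ Finset.Ico A B, (g k - (if k = 0 then 0 else g (k - 1)))
        = (if B = 0 then 0 else g (B - 1)) - (if A = 0 then 0 else g (A - 1)) := by
  refine Nat.le_induction ?_ ?_
  · simp
  · intro B hAB ih
    rw [Finset.sum_Ico_succ_top hAB, ih]
    have hB1 : B + 1 ≠ 0 := by omega
    rw [if_neg hB1, Nat.add_sub_cancel]
    abel

lemma Bpair_stepFun {m : ℕ} {τ : Fin (m + 1) → ℝ} (hτ : StrictMono τ)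
    (h : Fin (m + 1) → Hsp n) (u : ℝ → Hsp n) :
    Bpair m τ (stepFun m τ h) u =
      (inner ℂ (h 0) (u (τ 0)) : ℂ)
        + ∑ j : Fin m, (inner ℂ (h j.succ - h j.castSucc) (u (τ j.succ)) : ℂ) := by
  rw [Bpair]
  congr 1
  · rw [stepFun_self hτ h 0]
  · exact Finset.sum_congr rfl fun j _ => by
      rw [stepFun_self hτ h j.succ, stepFun_self hτ h j.castSucc]

end DP

namespace DP

open Aux

variable {n : ℕ}

lemma bin_bound (q : ℝ) (hq : 1 < q) (u W : ℝ → Hsp n)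
    (g : ℕ → Hsp n) (s : ℕ → ℝ) (M' : ℕ)
    (hsg : ∀ k, k ≤ M' → W (s k) = g k)
    (hsmono : Monotone s)
    (hsm : ∀ k k', k < k' → k' ≤ M' → s k < s k')
    (A B : ℕ) (hAB : A < B) (hBM : B ≤ M' + 1)
    (c₀ : Hsp n) (ℓ π : ℝ) (δ' : ℝ) (hδ' : 0 ≤ δ')
    (hℓ : ℓ < s A) (hπℓ : π ≤ ℓ) (hπs : W π = W ℓ)
    (hPrev : (if A = 0 then (0 : Hsp n) else g (A - 1)) = W π)
    (aE bE : EReal)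
    (hsupp : ∀ x : ℝ, ¬(aE < (x : EReal) ∧ (x : EReal) < bE) → x < ℓ ∨ s (B - 1) < x)
    (hLu : ‖u ℓ - c₀‖ ≤ δ')
    (hWvar : ‖W (s (B - 1)) - W π‖ ≤ 1)
    (hMS : MS q W π (s (B - 1)) ≠ ⊤) :
    (‖∑ k ∈ Finset.Ico A B,
        (inner ℂ (g k - (if k = 0 then 0 else g (k - 1))) (u (s k) - c₀) : ℂ)‖₊ : ℝ≥0∞)
      ≤ (2 * MS q W π (s (B - 1))) ^ (1 / q) * UdisNormLoc q aE bE u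
        + ENNReal.ofReal δ' := by
  classical
  have hq0 : (0 : ℝ) < q := lt_trans zero_lt_one hq
  obtain ⟨m, rfl⟩ : ∃ m, B = A + m + 1 := ⟨B - A - 1, by omega⟩
  have hBm : A + m + 1 - 1 = A + m := by omega
  simp only [hBm] at hsupp hWvar hMS ⊢
  have hAmM : A + m ≤ M' := by omega
  set r : ℝ := s (A + m) with hr
  set ττ : ℕ → ℝ := fun k => if k = 0 then ℓ else s (A + k - 1) with hττ
  set ρρ : ℕ → ℝ := fun k => if k = 0 then π else s (A + k - 1) with hρρ
  set τf : Fin (m + 2) → ℝ := fun j => ττ (j : ℕ) with hτf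
  set ρf : Fin (m + 2) → ℝ := fun j => ρρ (j : ℕ) with hρf
  have hρ0 : ρf 0 = π := by simp [hρf, hρρ]
  have hτ0 : τf 0 = ℓ := by simp [hτf, hττ]
  have harith : A + (m + 1) - 1 = A + m := by omega
  have hρlast : ρf (Fin.last (m + 1)) = r := by
    simp only [hρf, hρρ, Fin.val_last]
    rw [if_neg (by omega : ¬(m + 1 = 0)), harith, hr]
  have hτlast : τf (Fin.last (m + 1)) = r := by
    simp only [hτf, hττ, Fin.val_last]
    rw [if_neg (by omega : ¬(m + 1 = 0)), harith, hr]
  have hτstrict : StrictMono τf := by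
    intro j j' hjj
    have hjv : (j : ℕ) < (j' : ℕ) := hjj
    have hj'lt : (j' : ℕ) < m + 2 := j'.isLt
    simp only [hτf, hττ]
    by_cases hj0 : (j : ℕ) = 0
    · rw [if_pos hj0, if_neg (by omega : ¬((j' : ℕ) = 0))]
      exact lt_of_lt_of_le hℓ (hsmono (by omega : A ≤ A + (j' : ℕ) - 1))
    · rw [if_neg hj0, if_neg (by omega : ¬((j' : ℕ) = 0))]
      exact hsm _ _ (by omega) (by omega)
  have hρmono : Monotone ρf := by
    intro j j' hjj
    have hjv : (j : ℕ) ≤ (j' : ℕ) := hjj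
    have hj'lt : (j' : ℕ) < m + 2 := j'.isLt
    simp only [hρf, hρρ]
    by_cases hj0 : (j : ℕ) = 0
    · rw [if_pos hj0]
      by_cases hj'0 : (j' : ℕ) = 0
      · rw [if_pos hj'0]
      · rw [if_neg hj'0]
        exact le_trans (le_trans hπℓ hℓ.le) (hsmono (by omega : A ≤ A + (j' : ℕ) - 1))
    · rw [if_neg hj0, if_neg (by omega : ¬((j' : ℕ) = 0))]
      exact hsmono (by omega)
  set hf : Fin (m + 2) → Hsp n :=
    fun j => W (ρf j) - W (ρf (Fin.last (m + 1))) with hhf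
  have hπr : π ≤ r := le_trans (le_trans hπℓ hℓ.le) (by rw [hr]; exact hsmono (by omega))
  -- Bpair identity
  have hBp : Bpair (m + 1) τf (stepFun (m + 1) τf hf) u
      = (inner ℂ (W π - W r) (u ℓ) : ℂ)
        + ∑ k ∈ Finset.Ico A (A + m + 1),
            (inner ℂ (g k - (if k = 0 then 0 else g (k - 1))) (u (s k)) : ℂ) := by
    rw [Bpair_stepFun hτstrict hf u]
    have hf0 : hf 0 = W π - W r := by
      rw [hhf]
      show W (ρf 0) - W (ρf (Fin.last (m + 1))) = _
      rw [hρ0, hρlast]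
    rw [hf0, hτ0]
    congr 1
    · rw [Finset.sum_Ico_eq_sum_range]
      rw [show A + m + 1 - A = m + 1 from by omega]
      rw [← Fin.sum_univ_eq_sum_range
        (fun k => (inner ℂ (g (A + k) - if A + k = 0 then 0 else g (A + k - 1))
          (u (s (A + k))) : ℂ)) (m + 1)]
      refine Finset.sum_congr rfl fun j _ => ?_
      have hjlt : (j : ℕ) < m + 1 := j.isLt
      have e1 : τf j.succ = s (A + (j : ℕ)) := by
        simp only [hτf, hττ, Fin.val_succ]
        rw [if_neg (by omega : ¬((j : ℕ) + 1 = 0))]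
        exact congrArg s (by omega)
      have e3 : W (ρf j.succ) = g (A + (j : ℕ)) := by
        simp only [hρf, hρρ, Fin.val_succ]
        rw [if_neg (by omega : ¬((j : ℕ) + 1 = 0))]
        rw [show A + ((j : ℕ) + 1) - 1 = A + (j : ℕ) from by omega]
        exact hsg _ (by omega)
      have e4 : W (ρf j.castSucc)
          = (if A + (j : ℕ) = 0 then 0 else g (A + (j : ℕ) - 1)) := by
        simp only [hρf, hρρ, Fin.coe_castSucc]
        by_cases h0 : (j : ℕ) = 0
        · rw [if_pos h0, ← hPrev]
          simp [h0]
        · rw [if_neg h0, if_neg (by omega : ¬(A + (j : ℕ) = 0))]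
          rw [show A + (j : ℕ) - 1 = A + (j : ℕ) - 1 from rfl]
          exact hsg _ (by omega)
      have e2 : hf j.succ - hf j.castSucc
          = g (A + (j : ℕ)) - (if A + (j : ℕ) = 0 then 0 else g (A + (j : ℕ) - 1)) := by
        rw [hhf]
        show W (ρf j.succ) - W (ρf (Fin.last (m + 1)))
            - (W (ρf j.castSucc) - W (ρf (Fin.last (m + 1)))) = _
        rw [sub_sub_sub_cancel_right, e3, e4]
      rw [e1, e2]
  -- telescope
  have htel : ∑ k ∈ Finset.Ico A (A + m + 1),
      (g k - (if k = 0 then 0 else g (k - 1))) = W r - W π := by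
    rw [sum_d_telescope g A (A + m + 1) (by omega)]
    rw [if_neg (by omega : ¬(A + m + 1 = 0)), hBm, hPrev]
    rw [← hsg (A + m) hAmM, hr]
  -- group identity
  have hT : ∑ k ∈ Finset.Ico A (A + m + 1),
      (inner ℂ (g k - (if k = 0 then 0 else g (k - 1))) (u (s k) - c₀) : ℂ)
      = Bpair (m + 1) τf (stepFun (m + 1) τf hf) u
        + (inner ℂ (W r - W π) (u ℓ - c₀) : ℂ) := by
    rw [Finset.sum_congr rfl (fun k _ => inner_sub_right
      (g k - (if k = 0 then 0 else g (k - 1))) (u (s k)) c₀), Finset.sum_sub_distrib,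
      ← sum_inner, htel, hBp, inner_sub_right (W r - W π) (u ℓ) c₀,
      show W π - W r = -(W r - W π) from (neg_sub _ _).symm, inner_neg_left]
    ring
  -- the two bounds
  have hEb : (‖(inner ℂ (W r - W π) (u ℓ - c₀) : ℂ)‖₊ : ℝ≥0∞) ≤ ENNReal.ofReal δ' := by
    have hEnorm : ‖(inner ℂ (W r - W π) (u ℓ - c₀) : ℂ)‖ ≤ δ' := by
      refine le_trans (norm_inner_le_norm _ _) ?_
      have h2 := mul_le_mul hWvar hLu (norm_nonneg _) zero_le_one
      simpa using h2
    rw [← ENNReal.ofReal_coe_nnreal, coe_nnnorm]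
    exact ENNReal.ofReal_le_ofReal hEnorm
  have hBb : (‖Bpair (m + 1) τf (stepFun (m + 1) τf hf) u‖₊ : ℝ≥0∞)
      ≤ (2 * MS q W π r) ^ (1 / q) * UdisNormLoc q aE bE u := by
    by_cases hMS0 : MS q W π r = 0
    · have hzero : ∀ j : Fin (m + 2), hf j = 0 := by
        intro j
        have hρj1 : π ≤ ρf j := by
          have h5 := hρmono (Fin.zero_le j)
          rwa [hρ0] at h5
        have hρj2 : ρf j ≤ r := by
          have h5 := hρmono (Fin.le_last j)
          rwa [hρlast] at h5
        have hLSp : LS q W [ρf j, r] ≤ MS q W π r := by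
          refine le_MS q W π r _ (List.isChain_pair.2 hρj2) ?_
          intro x hx
          rcases List.mem_cons.1 hx with rfl | hx'
          · exact ⟨hρj1, hρj2⟩
          · rcases List.mem_singleton.1 hx' with rfl
            exact ⟨hπr, le_rfl⟩
        rw [hMS0, LS_pair] at hLSp
        have h00 := le_antisymm hLSp (zero_le)
        rw [ENNReal.rpow_eq_zero_iff] at h00
        have hnn : ‖W r - W (ρf j)‖₊ = 0 := by
          rcases h00 with ⟨h1, -⟩ | ⟨h1, -⟩
          · exact_mod_cast h1
          · exact absurd h1 ENNReal.coe_ne_top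
        have h6 : W r = W (ρf j) := by
          have h7 := nnnorm_eq_zero.1 hnn
          rwa [sub_eq_zero] at h7
        rw [hhf]
        show W (ρf j) - W (ρf (Fin.last (m + 1))) = 0
        rw [hρlast, ← h6, sub_self]
      have hB0 : Bpair (m + 1) τf (stepFun (m + 1) τf hf) u = 0 := by
        rw [Bpair_stepFun hτstrict hf u]
        simp [hzero]
      rw [hB0]
      simp
    · set lam := (2 * MS q W π r) ^ (1 / q) with hlam
      have h2MS0 : (2 : ℝ≥0∞) * MS q W π r ≠ 0 := by
        simp [hMS0]
      have h2MST : (2 : ℝ≥0∞) * MS q W π r ≠ ⊤ :=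
        ENNReal.mul_ne_top ENNReal.ofNat_ne_top hMS
      have hlam0 : lam ≠ 0 := by
        rw [hlam]
        exact (ENNReal.rpow_pos (pos_iff_ne_zero.2 h2MS0) h2MST).ne'
      have hlamT : lam ≠ ⊤ := by
        rw [hlam]
        exact ENNReal.rpow_ne_top_of_nonneg (by positivity) h2MST
      have hlamq : lam ^ q = 2 * MS q W π r := by
        rw [hlam, ← ENNReal.rpow_mul, one_div_mul_cancel (ne_of_gt hq0),
          ENNReal.rpow_one]
      set c : ℝ := (lam⁻¹).toReal with hc
      have hcoe : ENNReal.ofReal c = lam⁻¹ :=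
        ENNReal.ofReal_toReal (ENNReal.inv_ne_top.2 hlam0)
      have hcpos : 0 < c :=
        ENNReal.toReal_pos (ENNReal.inv_ne_zero.2 hlamT) (ENNReal.inv_ne_top.2 hlam0)
      have hcnn : ((‖c‖₊ : ℝ≥0∞)) = lam⁻¹ := by
        rw [← ENNReal.ofReal_coe_nnreal, coe_nnnorm, Real.norm_of_nonneg hcpos.le, hcoe]
      have hpv' : pVar q (stepFun (m + 1) τf (c • hf)) ≤ 1 := by
        have hLS : ∀ l : List ℝ, l.IsChain (· < ·) →
            LS q (stepFun (m + 1) τf (c • hf)) l ≤ 1 := by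
          intro l hl
          rw [stepFun_smul τf hf c, LS_smul q hq0.le _ c l, hcnn]
          have hstep : LS q (stepFun (m + 1) τf hf) l ≤ 2 * MS q W π r := by
            have h8 := LS_stepFun_le q hq0 W τf ρf hτstrict hρmono l
              (hl.imp (fun {a b} h => le_of_lt h))
            rw [hρ0, hρlast] at h8
            rw [hhf]
            exact h8
          calc lam⁻¹ ^ q * LS q (stepFun (m + 1) τf hf) l
              ≤ lam⁻¹ ^ q * (2 * MS q W π r) := mul_le_mul_right hstep _
            _ = 1 := by
                rw [ENNReal.inv_rpow, hlamq]
                exact ENNReal.inv_mul_cancel h2MS0 h2MST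
        have h9 := pVar_le_of_LS q hq0 _ 1 hLS
        rwa [ENNReal.one_rpow] at h9
      have hsupp' : ∀ x : ℝ, ¬(aE < (x : EReal) ∧ (x : EReal) < bE) →
          stepFun (m + 1) τf (c • hf) x = 0 := by
        intro x hx
        rcases hsupp x hx with hxl | hxr
        · refine stepFun_apply_lt hτstrict.monotone _ ?_
          rw [hτ0]
          exact hxl
        · rw [stepFun_apply_last hτstrict.monotone _ (by rw [hτlast]; exact hxr.le)]
          rw [Pi.smul_apply, hhf]
          simp
      have hX : (ENNReal.ofReal c)
          * (‖Bpair (m + 1) τf (stepFun (m + 1) τf hf) u‖₊ : ℝ≥0∞)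
          ≤ UdisNormLoc q aE bE u := by
        rw [UdisNormLoc]
        refine le_iSup_of_le (m + 1) (le_iSup_of_le τf (le_iSup_of_le hτstrict
          (le_iSup_of_le (c • hf) (le_iSup_of_le hsupp' (le_iSup_of_le hpv' ?_)))))
        rw [stepFun_smul τf hf c, Bpair_smul τf _ u c, nnnorm_mul,
          Complex.nnnorm_real, ENNReal.coe_mul, hcnn, hcoe]
      have h10 := mul_le_mul_right hX lam
      rw [← mul_assoc, hcoe, ENNReal.mul_inv_cancel hlam0 hlamT, one_mul] at h10
      exact h10
  rw [hT]
  calc (‖Bpair (m + 1) τf (stepFun (m + 1) τf hf) u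
        + (inner ℂ (W r - W π) (u ℓ - c₀) : ℂ)‖₊ : ℝ≥0∞)
      ≤ (‖Bpair (m + 1) τf (stepFun (m + 1) τf hf) u‖₊ : ℝ≥0∞)
        + (‖(inner ℂ (W r - W π) (u ℓ - c₀) : ℂ)‖₊ : ℝ≥0∞) := by
        rw [← ENNReal.coe_add]
        exact ENNReal.coe_le_coe.2 (nnnorm_add_le _ _)
    _ ≤ (2 * MS q W π r) ^ (1 / q) * UdisNormLoc q aE bE u + ENNReal.ofReal δ' :=
        add_le_add hBb hEb

end DP

open DP Aux in
/-- (Local-to-global bound for the discrete weak `U^p` norm.) Let `1 < p < ∞`,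
`1/p + 1/q = 1`, and let `(t_j)` be a finite increasing sequence. If `u ∈ L^∞_t L^2_x` is right
continuous with `u(t) → 0` as `t → -∞`, and `u_τ` is the associated step function, then
`‖u - u_τ‖_{Ũ^p_{dis}} ≤ 4 (∑_j ‖u‖_{Ũ^p_{dis}(t_j, t_{j+1})}^p)^{1/p}` (with `t₋ = -∞`,
`t₊ = ∞` for the outer gaps). -/
theorem stmt13 (n : ℕ) (p q : ℝ) (hp : 1 < p) (hq : 1 < q) (hpq : 1 / p + 1 / q = 1)
    (N : ℕ) (t : Fin (N + 1) → ℝ) (ht : StrictMono t) (u : ℝ → Hsp n)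
    (hbdd : ∃ K : ℝ, ∀ s : ℝ, ‖u s‖ ≤ K)
    (hrc : ∀ s : ℝ, ContinuousWithinAt u (Set.Ici s) s)
    (hlim : Filter.Tendsto u Filter.atBot (nhds 0)) :
    DP.UdisNorm q (u - DP.stepFun N t fun j => u (t j)) ≤
      4 * ((DP.UdisNormLoc q ⊥ ((t 0 : ℝ) : EReal) u ^ p
          + ∑ j : Fin N,
              DP.UdisNormLoc q ((t j.castSucc : ℝ) : EReal) ((t j.succ : ℝ) : EReal) u ^ p)
          + DP.UdisNormLoc q ((t (Fin.last N) : ℝ) : EReal) ⊤ u ^ p) ^ (1 / p) := by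
  classical
  have hq0 : (0 : ℝ) < q := lt_trans zero_lt_one hq
  have hp0 : (0 : ℝ) < p := lt_trans zero_lt_one hp
  set v : ℝ → Hsp n := u - DP.stepFun N t fun j => u (t j) with hv
  -- the EReal interval endpoints
  have hminN : ∀ i : ℕ, min i N < N + 1 := fun i => Nat.lt_succ_of_le (min_le_right _ _)
  set tL : ℕ → ℝ := fun i => t ⟨min (i - 1) N, hminN (i - 1)⟩ with htL
  set tR : ℕ → ℝ := fun i => t ⟨min i N, hminN i⟩ with htR
  set aE : ℕ → EReal := fun i => if i = 0 then ⊥ else ((tL i : ℝ) : EReal) with haE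
  set bE : ℕ → EReal := fun i => if i ≤ N then ((tR i : ℝ) : EReal) else ⊤ with hbE
  -- rewrite the RHS sum
  have hTsum : (DP.UdisNormLoc q ⊥ ((t 0 : ℝ) : EReal) u ^ p
        + ∑ j : Fin N,
            DP.UdisNormLoc q ((t j.castSucc : ℝ) : EReal) ((t j.succ : ℝ) : EReal) u ^ p)
        + DP.UdisNormLoc q ((t (Fin.last N) : ℝ) : EReal) ⊤ u ^ p
      = ∑ i ∈ Finset.range (N + 2), DP.UdisNormLoc q (aE i) (bE i) u ^ p := by
    rw [Finset.sum_range_succ, Finset.sum_range_succ']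
    have e0 : DP.UdisNormLoc q (aE 0) (bE 0) u = DP.UdisNormLoc q ⊥ ((t 0 : ℝ) : EReal) u := by
      have h1 : aE 0 = ⊥ := by simp [haE]
      have h2 : bE 0 = ((t 0 : ℝ) : EReal) := by
        have h3 : tR 0 = t 0 := by
          simp only [htR]
          exact congrArg t (Fin.ext (by simp))
        simp [hbE, h3]
      rw [h1, h2]
    have etop : DP.UdisNormLoc q (aE (N + 1)) (bE (N + 1)) u
        = DP.UdisNormLoc q ((t (Fin.last N) : ℝ) : EReal) ⊤ u := by
      have h1 : aE (N + 1) = ((t (Fin.last N) : ℝ) : EReal) := by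
        have h3 : tL (N + 1) = t (Fin.last N) := by
          simp only [htL]
          exact congrArg t (Fin.ext (by simp [Fin.last]))
        simp only [haE, h3]
        rw [if_neg (by omega : ¬(N + 1 = 0))]
      have h2 : bE (N + 1) = ⊤ := by
        simp only [hbE]
        rw [if_neg (by omega : ¬(N + 1 ≤ N))]
      rw [h1, h2]
    have emid : ∑ j : Fin N,
        DP.UdisNormLoc q ((t j.castSucc : ℝ) : EReal) ((t j.succ : ℝ) : EReal) u ^ p
        = ∑ k ∈ Finset.range N, DP.UdisNormLoc q (aE (k + 1)) (bE (k + 1)) u ^ p := by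
      rw [← Fin.sum_univ_eq_sum_range
        (fun k => DP.UdisNormLoc q (aE (k + 1)) (bE (k + 1)) u ^ p) N]
      refine Finset.sum_congr rfl fun j _ => ?_
      have hjN : (j : ℕ) < N := j.isLt
      have ha : aE ((j : ℕ) + 1) = ((t j.castSucc : ℝ) : EReal) := by
        have h3 : tL ((j : ℕ) + 1) = t j.castSucc := by
          simp only [htL]
          exact congrArg t (Fin.ext (by
            simp [Nat.min_eq_left (by omega : (j : ℕ) + 1 - 1 ≤ N)]))
        simp only [haE, h3]
        rw [if_neg (by omega : ¬((j : ℕ) + 1 = 0))]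
      have hb : bE ((j : ℕ) + 1) = ((t j.succ : ℝ) : EReal) := by
        have h3 : tR ((j : ℕ) + 1) = t j.succ := by
          simp only [htR]
          exact congrArg t (Fin.ext (by
            simp [Fin.val_succ, Nat.min_eq_left (by omega : (j : ℕ) + 1 ≤ N)]))
        simp only [hbE, h3]
        rw [if_pos (by omega : (j : ℕ) + 1 ≤ N)]
      rw [ha, hb]
    rw [← e0, ← etop, emid]
    ring
  rw [DP.UdisNorm]
  refine iSup_le fun M' => iSup_le fun t' => iSup_le fun ht' => iSup_le fun f' =>
    iSup_le fun hpv => ?_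
  set W : ℝ → Hsp n := DP.stepFun M' t' f' with hW
  have hminM : ∀ k : ℕ, min k M' < M' + 1 := fun k => Nat.lt_succ_of_le (min_le_right _ _)
  set s : ℕ → ℝ := fun k => t' ⟨min k M', hminM k⟩ with hs
  set g : ℕ → Hsp n := fun k => f' ⟨min k M', hminM k⟩ with hg
  have hsg : ∀ k, k ≤ M' → W (s k) = g k := by
    intro k hk
    simp only [hs, hg, hW]
    exact DP.stepFun_self ht' f' _
  have hsmono : Monotone s := by
    intro a b hab
    simp only [hs]
    exact ht'.monotone (Fin.mk_le_mk.2 (min_le_min hab le_rfl))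
  have hsm : ∀ k k', k < k' → k' ≤ M' → s k < s k' := by
    intro k k' hkk hk'M
    simp only [hs]
    refine ht' (Fin.mk_lt_mk.2 ?_)
    rw [Nat.min_eq_left (by omega : k ≤ M'), Nat.min_eq_left hk'M]
    exact hkk
  have hs0 : s 0 = t' 0 := by
    simp only [hs]
    exact congrArg t' (Fin.ext (by simp))
  -- variation facts from the hypothesis on W
  have hS1 : ∀ l : List ℝ, l.IsChain (· < ·) → Aux.LS q W l ≤ 1 :=
    DP.LS_le_of_pVar q hq0 W hpv
  have hMSfull : Aux.MSfull q W ≤ 1 := Aux.MSfull_le q hq0 W 1 hS1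
  have hMSle1 : ∀ a b : ℝ, Aux.MS q W a b ≤ 1 := fun a b =>
    le_trans (Aux.MS_le_MSfull q W a b) hMSfull
  have hW1 : ∀ x y : ℝ, x ≤ y → ‖W y - W x‖ ≤ 1 := by
    intro x y hxy
    rcases eq_or_lt_of_le hxy with rfl | hlt
    · simp
    · have h1 := hS1 [x, y] (List.isChain_pair.2 hlt)
      rw [Aux.LS_pair] at h1
      have h2 : (‖W y - W x‖₊ : ℝ≥0∞) ≤ 1 := by
        by_contra hcon
        push_neg at hcon
        have h3 : (1 : ℝ≥0∞) < (‖W y - W x‖₊ : ℝ≥0∞) ^ q := by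
          calc (1 : ℝ≥0∞) = 1 ^ q := (ENNReal.one_rpow q).symm
            _ < _ := ENNReal.rpow_lt_rpow hcon hq0
        exact absurd (lt_of_lt_of_le h3 h1) (lt_irrefl _)
      have h4 : ‖W y - W x‖₊ ≤ 1 := by exact_mod_cast h2
      exact_mod_cast h4
  -- plateau facts for W
  have hW0 : ∀ x : ℝ, x < s 0 → W x = 0 := by
    intro x hx
    rw [hs0] at hx
    exact DP.stepFun_apply_lt ht'.monotone f' hx
  have hWconst : ∀ k, k < M' → ∀ x : ℝ, s k ≤ x → x < s (k + 1) → W x = g k := by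
    intro k hk x h1 h2
    have ecs : s k = t' (⟨k, hk⟩ : Fin M').castSucc := by
      simp only [hs]
      exact congrArg t' (Fin.ext (by simp [Nat.min_eq_left hk.le]))
    have esc : s (k + 1) = t' (⟨k, hk⟩ : Fin M').succ := by
      simp only [hs]
      exact congrArg t' (Fin.ext (by simp [Nat.min_eq_left (by omega : k + 1 ≤ M')]))
    rw [ecs] at h1
    rw [esc] at h2
    have := DP.stepFun_apply_mem ht' f' ⟨k, hk⟩ h1 h2
    rw [hW, this]
    simp only [hg]
    exact congrArg f' (Fin.ext (by simp [Nat.min_eq_left hk.le]))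
  -- classification of partition points
  set cnt : ℕ → ℕ :=
    fun k => (Finset.univ.filter (fun j : Fin (N + 1) => t j ≤ s k)).card with hcnt
  have hcnt_iff : ∀ k (j : Fin (N + 1)), t j ≤ s k ↔ (j : ℕ) < cnt k := by
    intro k j
    have hdc : ∀ k' ∈ (Finset.univ.filter (fun j : Fin (N + 1) => t j ≤ s k)).image Fin.val,
        ∀ k2, k2 ≤ k' →
          k2 ∈ (Finset.univ.filter (fun j : Fin (N + 1) => t j ≤ s k)).image Fin.val := by
      intro k' hk' k2 hk2
      rw [Finset.mem_image] at hk' ⊢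
      obtain ⟨j', hj'S, rfl⟩ := hk'
      simp only [Finset.mem_filter, Finset.mem_univ, true_and] at hj'S
      refine ⟨⟨k2, by omega⟩, ?_, rfl⟩
      simp only [Finset.mem_filter, Finset.mem_univ, true_and]
      exact le_trans (ht.monotone (by rw [Fin.le_def]; simpa using hk2)) hj'S
    have himg := Aux.dcl_eq_range _ hdc
    have hcard : ((Finset.univ.filter (fun j : Fin (N + 1) => t j ≤ s k)).image Fin.val).card
        = cnt k := by
      rw [Finset.card_image_of_injective _ Fin.val_injective]
    constructor
    · intro hj
      have hmem : (j : ℕ) ∈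
          (Finset.univ.filter (fun j : Fin (N + 1) => t j ≤ s k)).image Fin.val :=
        Finset.mem_image_of_mem _ (by simp [hj])
      rw [himg, hcard] at hmem
      exact Finset.mem_range.1 hmem
    · intro hj
      have hmem : (j : ℕ) ∈
          (Finset.univ.filter (fun j : Fin (N + 1) => t j ≤ s k)).image Fin.val := by
        rw [himg, hcard]
        exact Finset.mem_range.2 hj
      rw [Finset.mem_image] at hmem
      obtain ⟨j2, hj2S, hj2v⟩ := hmem
      have hj2 : j2 = j := Fin.ext hj2v
      subst hj2
      simp only [Finset.mem_filter, Finset.mem_univ, true_and] at hj2S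
      exact hj2S
  have hcnt_le : ∀ k, cnt k ≤ N + 1 := by
    intro k
    simp only [hcnt]
    exact le_trans (Finset.card_filter_le _ _) (by simp)
  have hcnt_mono : Monotone cnt := by
    intro a b hab
    simp only [hcnt]
    refine Finset.card_le_card ?_
    intro j hj
    simp only [Finset.mem_filter, Finset.mem_univ, true_and] at hj ⊢
    exact le_trans hj (hsmono hab)
  set low : ℕ → ℕ := fun i => ((Finset.range (M' + 1)).filter (fun k => cnt k < i)).card
    with hlow
  have hlow_iff : ∀ i k, k ≤ M' → (cnt k < i ↔ k < low i) := by
    intro i k hk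
    have hdc : ∀ k' ∈ (Finset.range (M' + 1)).filter (fun k => cnt k < i),
        ∀ k2, k2 ≤ k' → k2 ∈ (Finset.range (M' + 1)).filter (fun k => cnt k < i) := by
      intro k' hk' k2 hk2
      simp only [Finset.mem_filter, Finset.mem_range] at hk' ⊢
      exact ⟨by omega, lt_of_le_of_lt (hcnt_mono hk2) hk'.2⟩
    have hF := Aux.dcl_eq_range _ hdc
    constructor
    · intro h1
      have hmem : k ∈ (Finset.range (M' + 1)).filter (fun k => cnt k < i) := by
        simp only [Finset.mem_filter, Finset.mem_range]
        exact ⟨by omega, h1⟩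
      rw [hF] at hmem
      exact Finset.mem_range.1 hmem
    · intro h1
      have hmem : k ∈ (Finset.range (M' + 1)).filter (fun k => cnt k < i) := by
        rw [hF]
        exact Finset.mem_range.2 h1
      simp only [Finset.mem_filter] at hmem
      exact hmem.2
  have hlow_le : ∀ i, low i ≤ M' + 1 := by
    intro i
    simp only [hlow]
    exact le_trans (Finset.card_filter_le _ _) (by simp)
  have hlow_mono : Monotone low := by
    intro a b hab
    simp only [hlow]
    refine Finset.card_le_card ?_
    intro k hk
    simp only [Finset.mem_filter] at hk ⊢
    exact ⟨hk.1, lt_of_lt_of_le hk.2 hab⟩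
  have hlow0 : low 0 = 0 := by
    simp only [hlow]
    rw [Finset.filter_false_of_mem (fun k _ => by omega)]
    simp
  have hbin : ∀ i, (Finset.range (M' + 1)).filter (fun k => cnt k = i)
      = Finset.Ico (low i) (low (i + 1)) := by
    intro i
    ext k
    simp only [Finset.mem_filter, Finset.mem_range, Finset.mem_Ico]
    by_cases hk : k ≤ M'
    · have h1 := hlow_iff i k hk
      have h2 := hlow_iff (i + 1) k hk
      omega
    · have h3 := hlow_le (i + 1)
      omega
  have hbinmem : ∀ i k, low i ≤ k → k < low (i + 1) → cnt k = i ∧ k ≤ M' := by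
    intro i k h1 h2
    have hmem : k ∈ Finset.Ico (low i) (low (i + 1)) := Finset.mem_Ico.2 ⟨h1, h2⟩
    rw [← hbin] at hmem
    simp only [Finset.mem_filter, Finset.mem_range] at hmem
    exact ⟨hmem.2, by omega⟩
  -- threshold comparisons
  have htLle : ∀ i k, 1 ≤ i → i ≤ N + 1 → i ≤ cnt k → tL i ≤ s k := by
    intro i k h1 h2 h3
    simp only [htL]
    rw [hcnt_iff k ⟨min (i - 1) N, hminN (i - 1)⟩]
    show min (i - 1) N < cnt k
    rw [Nat.min_eq_left (by omega)]
    omega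
  have htLgt : ∀ i k, 1 ≤ i → i ≤ N + 1 → cnt k < i → s k < tL i := by
    intro i k h1 h2 h3
    rw [← not_le]
    simp only [htL]
    rw [hcnt_iff k ⟨min (i - 1) N, hminN (i - 1)⟩]
    show ¬ (min (i - 1) N < cnt k)
    rw [Nat.min_eq_left (by omega)]
    omega
  have htRgt : ∀ i k, i ≤ N → cnt k ≤ i → s k < tR i := by
    intro i k h1 h2
    rw [← not_le]
    simp only [htR]
    rw [hcnt_iff k ⟨min i N, hminN i⟩]
    show ¬ (min i N < cnt k)
    rw [Nat.min_eq_left h1]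
    omega
  have hs0gt : ∀ k, cnt k = 0 → s k < t 0 := by
    intro k h1
    rw [← not_le]
    rw [hcnt_iff k 0]
    simp [h1]
  -- decomposition of the pairing
  set d : ℕ → Hsp n := fun k => g k - (if k = 0 then 0 else g (k - 1)) with hd
  have hBP : DP.Bpair M' t' W v = ∑ k ∈ Finset.range (M' + 1), (inner ℂ (d k) (v (s k)) : ℂ) := by
    have hfirst : (inner ℂ (W (t' 0)) (v (t' 0)) : ℂ) = inner ℂ (d 0) (v (s 0)) := by
      have e1 : d 0 = W (t' 0) := by
        have h8 : d 0 = g 0 := by simp [hd]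
        rw [h8, hW, DP.stepFun_self ht' f' 0]
        simp only [hg]
        exact congrArg f' (Fin.ext (by simp))
      rw [e1, hs0]
    have hrest : ∑ j : Fin M',
        (inner ℂ (W (t' j.succ) - W (t' j.castSucc)) (v (t' j.succ)) : ℂ)
        = ∑ k ∈ Finset.range M', (inner ℂ (d (k + 1)) (v (s (k + 1))) : ℂ) := by
      rw [← Fin.sum_univ_eq_sum_range
        (fun k => (inner ℂ (d (k + 1)) (v (s (k + 1))) : ℂ)) M']
      refine Finset.sum_congr rfl fun j _ => ?_
      have hjM : (j : ℕ) < M' := j.isLt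
      have es : s ((j : ℕ) + 1) = t' j.succ := by
        simp only [hs]
        exact congrArg t' (Fin.ext (by
          simp [Fin.val_succ, Nat.min_eq_left (by omega : (j : ℕ) + 1 ≤ M')]))
      have ec : s (j : ℕ) = t' j.castSucc := by
        simp only [hs]
        exact congrArg t' (Fin.ext (by simp [Nat.min_eq_left (by omega : (j : ℕ) ≤ M')]))
      have ed : d ((j : ℕ) + 1) = W (t' j.succ) - W (t' j.castSucc) := by
        simp only [hd]
        rw [if_neg (by omega : ¬((j : ℕ) + 1 = 0))]
        rw [show (j : ℕ) + 1 - 1 = (j : ℕ) from by omega]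
        rw [← hsg ((j : ℕ) + 1) (by omega), ← hsg (j : ℕ) (by omega), es, ec]
      rw [ed, es]
    rw [DP.Bpair, hfirst, hrest]
    rw [Finset.sum_range_succ' (fun k => (inner ℂ (d k) (v (s k)) : ℂ)) M']
    exact add_comm _ _
  have hBsum : DP.Bpair M' t' W v
      = ∑ i ∈ Finset.range (N + 2), ∑ k ∈ Finset.Ico (low i) (low (i + 1)),
          (inner ℂ (d k) (v (s k)) : ℂ) := by
    rw [hBP]
    have hmap : ∀ k ∈ Finset.range (M' + 1), cnt k ∈ Finset.range (N + 2) :=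
      fun k _ => Finset.mem_range.2 (by have := hcnt_le k; omega)
    rw [← Finset.sum_fiberwise_of_maps_to hmap (fun k => (inner ℂ (d k) (v (s k)) : ℂ))]
    exact Finset.sum_congr rfl fun i _ => by rw [hbin i]
  -- value of v on the bins
  set c0 : ℕ → Hsp n := fun i => if i = 0 then 0 else u (tL i) with hc0
  have hvk : ∀ i, i < N + 2 → ∀ k, low i ≤ k → k < low (i + 1) → v (s k) = u (s k) - c0 i := by
    intro i hi k h1 h2
    obtain ⟨hck, hkM⟩ := hbinmem i k h1 h2
    rw [hv]
    simp only [Pi.sub_apply]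
    congr 1
    simp only [hc0]
    by_cases hi0 : i = 0
    · rw [if_pos hi0]
      refine DP.stepFun_apply_lt ht.monotone _ ?_
      exact hs0gt k (by omega)
    · rw [if_neg hi0]
      by_cases hiN : i ≤ N
      · have hj : ((⟨i - 1, by omega⟩ : Fin N) : ℕ) = i - 1 := rfl
        have h3 : t (⟨i - 1, by omega⟩ : Fin N).castSucc ≤ s k := by
          have := htLle i k (by omega) (by omega) (by omega)
          simp only [htL] at this
          refine le_trans (le_of_eq (congrArg t (Fin.ext ?_))) this
          simp [Nat.min_eq_left (by omega : i - 1 ≤ N)]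
        have h4 : s k < t (⟨i - 1, by omega⟩ : Fin N).succ := by
          have := htRgt i k (by omega) (by omega)
          simp only [htR] at this
          refine lt_of_lt_of_le this (le_of_eq (congrArg t (Fin.ext ?_)))
          simp [Fin.val_succ, Nat.min_eq_left hiN]
          omega
        rw [DP.stepFun_apply_mem ht _ _ h3 h4]
        refine congrArg u (congrArg t (Fin.ext ?_))
        simp [htL, Nat.min_eq_left (by omega : i - 1 ≤ N)]
      · have hiN1 : i = N + 1 := by omega
        have h3 : t (Fin.last N) ≤ s k := by
          have := htLle i k (by omega) (by omega) (by omega)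
          simp only [htL] at this
          refine le_trans (le_of_eq (congrArg t (Fin.ext ?_))) this
          simp [Fin.last, Nat.min_eq_left (by omega : i - 1 ≤ N)]
          omega
        rw [DP.stepFun_apply_last ht.monotone _ h3]
        refine congrArg u (congrArg t (Fin.ext ?_))
        simp [htL, Fin.last, Nat.min_eq_left (by omega : i - 1 ≤ N)]
        omega
  -- conclude via epsilon argument
  rw [hTsum]
  refine ENNReal.le_of_forall_pos_le_add ?_
  intro ε hε hfin
  set δ' : ℝ := (ε : ℝ) / ((N : ℝ) + 2) with hδ'def
  have hδ'pos : 0 < δ' := by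
    rw [hδ'def]
    have : (0 : ℝ) < (ε : ℝ) := by exact_mod_cast hε
    positivity
  -- the shifted left endpoints of the bins
  set A' : ℕ → ℕ := fun i =>
    if i ≠ 0 ∧ low i < low (i + 1) ∧ s (low i) = tL i then low i + 1 else low i with hA'
  have hA'ge : ∀ i, low i ≤ A' i := by
    intro i
    simp only [hA']
    split <;> omega
  have hA'le : ∀ i, A' i ≤ low (i + 1) := by
    intro i
    simp only [hA']
    split
    · next hcond => omega
    · exact hlow_mono (by omega)
  have hA'M : ∀ i, A' i < low (i + 1) → A' i ≤ M' := by
    intro i hi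
    have := hlow_le (i + 1)
    omega
  have hcntA' : ∀ i, A' i < low (i + 1) → cnt (A' i) = i :=
    fun i hi => (hbinmem i (A' i) (hA'ge i) hi).1
  have hA'0 : A' 0 = 0 := by
    simp only [hA']
    rw [if_neg (by simp)]
    exact hlow0
  have htLlt : ∀ i, 1 ≤ i → i ≤ N + 1 → A' i < low (i + 1) → tL i < s (A' i) := by
    intro i h1 h2 hne
    by_cases hcond : i ≠ 0 ∧ low i < low (i + 1) ∧ s (low i) = tL i
    · have hA'eq : A' i = low i + 1 := by simp only [hA']; rw [if_pos hcond]
      have hlt2 : s (low i) < s (low i + 1) := by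
        refine hsm _ _ (by omega) ?_
        rw [hA'eq] at hne
        have := hlow_le (i + 1)
        omega
      rw [← hcond.2.2, hA'eq]
      exact hlt2
    · have hA'eq : A' i = low i := by simp only [hA']; rw [if_neg hcond]
      have hle : tL i ≤ s (A' i) := by
        refine htLle i (A' i) h1 h2 ?_
        have := hcntA' i hne
        omega
      rcases eq_or_lt_of_le hle with heq | hlt
      · exfalso
        refine hcond ⟨by omega, by rwa [hA'eq] at hne, ?_⟩
        rw [← hA'eq]
        exact heq.symm
      · exact hlt
  -- choose the left test points
  have hchoice : ∀ i : ℕ, ∃ x : ℝ, (i < N + 2 ∧ A' i < low (i + 1)) →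
      (x < s (A' i) ∧ (i = 0 → ‖u x‖ ≤ δ') ∧
        (i ≠ 0 → tL i < x ∧ ‖u x - u (tL i)‖ ≤ δ')) := by
    intro i
    by_cases hcond : i < N + 2 ∧ A' i < low (i + 1)
    · by_cases hi0 : i = 0
      · subst hi0
        have h1 : ∀ᶠ x in Filter.atBot, ‖u x‖ ≤ δ' := by
          have h2 := Metric.tendsto_nhds.mp hlim δ' hδ'pos
          filter_upwards [h2] with x hx
          rw [dist_zero_right] at hx
          exact hx.le
        have h2 : ∀ᶠ x in Filter.atBot, x < s (A' 0) := Filter.eventually_lt_atBot _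
        obtain ⟨x, hx1, hx2⟩ := (h1.and h2).exists
        exact ⟨x, fun _ => ⟨hx2, fun _ => hx1, fun h0 => absurd rfl h0⟩⟩
      · have htlt : tL i < s (A' i) := htLlt i (by omega) (by omega : i ≤ N + 1) hcond.2
        have hcont : ContinuousWithinAt u (Set.Ioi (tL i)) (tL i) :=
          (hrc (tL i)).mono Set.Ioi_subset_Ici_self
        have hev1 : ∀ᶠ x in nhdsWithin (tL i) (Set.Ioi (tL i)), ‖u x - u (tL i)‖ ≤ δ' := by
          have h2 := Metric.tendsto_nhds.mp hcont δ' hδ'pos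
          filter_upwards [h2] with x hx
          rw [dist_eq_norm] at hx
          exact hx.le
        have hev2 : Set.Ioo (tL i) (s (A' i)) ∈ nhdsWithin (tL i) (Set.Ioi (tL i)) :=
          Ioo_mem_nhdsGT_of_mem ⟨le_rfl, htlt⟩
        obtain ⟨x, hx1, hx2⟩ := (hev1.and hev2).exists
        exact ⟨x, fun _ => ⟨hx2.2, fun h0 => absurd h0 hi0, fun _ => ⟨hx2.1, hx1⟩⟩⟩
    · exact ⟨0, fun h => absurd h hcond⟩
  choose ℓf hℓf using hchoice
  -- interval endpoints for the variation bookkeeping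
  set ℓstar : ℝ := min (ℓf (cnt 0)) (s 0) with hℓstar
  set bfun : ℕ → ℝ := fun i => if low (i + 1) = 0 then ℓstar else s (low (i + 1) - 1)
    with hbfun
  set pifun : ℕ → ℝ := fun i => if A' i = 0 then ℓf i else s (A' i - 1) with hpifun
  set afun : ℕ → ℝ := fun i => if A' i < low (i + 1) then pifun i else bfun i with hafun
  set T : ℝ≥0∞ := ∑ i ∈ Finset.range (N + 2), DP.UdisNormLoc q (aE i) (bE i) u ^ p with hT
  -- the per-bin bound
  have hGp : ∀ i ∈ Finset.range (N + 2),
      (‖∑ k ∈ Finset.Ico (low i) (low (i + 1)), (inner ℂ (d k) (v (s k)) : ℂ)‖₊ : ℝ≥0∞)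
        ≤ (2 * Aux.MS q W (afun i) (bfun i)) ^ (1 / q)
            * DP.UdisNormLoc q (aE i) (bE i) u + ENNReal.ofReal δ' := by
    intro i hi
    rw [Finset.mem_range] at hi
    have hsum1 : ∑ k ∈ Finset.Ico (low i) (low (i + 1)), (inner ℂ (d k) (v (s k)) : ℂ)
        = ∑ k ∈ Finset.Ico (low i) (low (i + 1)), (inner ℂ (d k) (u (s k) - c0 i) : ℂ) :=
      Finset.sum_congr rfl fun k hk => by
        rw [hvk i hi k (Finset.mem_Ico.1 hk).1 (Finset.mem_Ico.1 hk).2]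
    have hsum2 : ∑ k ∈ Finset.Ico (low i) (low (i + 1)), (inner ℂ (d k) (u (s k) - c0 i) : ℂ)
        = ∑ k ∈ Finset.Ico (A' i) (low (i + 1)), (inner ℂ (d k) (u (s k) - c0 i) : ℂ) := by
      by_cases hcond : i ≠ 0 ∧ low i < low (i + 1) ∧ s (low i) = tL i
      · have hA'eq : A' i = low i + 1 := by simp only [hA']; rw [if_pos hcond]
        rw [Finset.sum_eq_sum_Ico_succ_bot hcond.2.1]
        have hzero : (inner ℂ (d (low i)) (u (s (low i)) - c0 i) : ℂ) = 0 := by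
          rw [hcond.2.2]
          simp only [hc0]
          rw [if_neg hcond.1, sub_self, inner_zero_right]
        rw [hzero, zero_add, hA'eq]
      · have hA'eq : A' i = low i := by simp only [hA']; rw [if_neg hcond]
        rw [hA'eq]
    rw [hsum1, hsum2]
    by_cases hne : A' i < low (i + 1)
    · have hℓi := hℓf i ⟨hi, hne⟩
      have hafeq : afun i = pifun i := by simp only [hafun]; rw [if_pos hne]
      have hbfeq : bfun i = s (low (i + 1) - 1) := by
        simp only [hbfun]
        rw [if_neg (by omega : ¬(low (i + 1) = 0))]
      have hi0ne : A' i ≠ 0 → i ≠ 0 := by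
        intro h0 h
        rw [h] at h0
        exact h0 hA'0
      have hsA1tL : A' i ≠ 0 → s (A' i - 1) ≤ tL i := by
        intro h0
        by_cases hcond : i ≠ 0 ∧ low i < low (i + 1) ∧ s (low i) = tL i
        · have hA'eq : A' i = low i + 1 := by simp only [hA']; rw [if_pos hcond]
          rw [hA'eq]
          simp only [Nat.add_sub_cancel]
          exact hcond.2.2.le
        · have hA'eq : A' i = low i := by simp only [hA']; rw [if_neg hcond]
          have hkM : low i - 1 ≤ M' := by have := hlow_le i; omega
          have hclt : cnt (low i - 1) < i := by
            refine (hlow_iff i _ hkM).2 ?_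
            rw [hA'eq] at h0
            omega
          have hgt := htLgt i (low i - 1) (by
            rcases Nat.eq_zero_or_pos i with rfl | hipos
            · exact absurd hA'0 h0
            · omega) (by omega) hclt
          rw [hA'eq]
          exact hgt.le
      have hπle : pifun i ≤ ℓf i := by
        simp only [hpifun]
        by_cases h0 : A' i = 0
        · rw [if_pos h0]
        · rw [if_neg h0]
          exact le_trans (hsA1tL h0) ((hℓi.2.2 (hi0ne h0)).1).le
      have hπW : W (pifun i) = W (ℓf i) := by
        simp only [hpifun]
        by_cases h0 : A' i = 0
        · rw [if_pos h0]
        · rw [if_neg h0]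
          have hkM : A' i - 1 < M' := by have := hA'M i hne; omega
          have hc1 : W (s (A' i - 1)) = g (A' i - 1) := hsg _ (by omega)
          have hc2 : W (ℓf i) = g (A' i - 1) := by
            refine hWconst (A' i - 1) hkM (ℓf i) ?_ ?_
            · exact le_trans (hsA1tL h0) ((hℓi.2.2 (hi0ne h0)).1).le
            · rw [show A' i - 1 + 1 = A' i from by omega]
              exact hℓi.1
          rw [hc1, hc2]
      have hPrev_i : (if A' i = 0 then (0 : Hsp n) else g (A' i - 1)) = W (pifun i) := by
        simp only [hpifun]
        by_cases h0 : A' i = 0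
        · rw [if_pos h0, if_pos h0]
          refine (hW0 (ℓf i) ?_).symm
          have h5 := hℓi.1
          rwa [h0] at h5
        · rw [if_neg h0, if_neg h0]
          exact (hsg _ (by have := hA'M i hne; omega)).symm
      have hLu_i : ‖u (ℓf i) - c0 i‖ ≤ δ' := by
        simp only [hc0]
        by_cases h0 : i = 0
        · rw [if_pos h0, sub_zero]
          exact hℓi.2.1 h0
        · rw [if_neg h0]
          exact (hℓi.2.2 h0).2
      have hπb : pifun i ≤ s (low (i + 1) - 1) :=
        le_trans hπle (le_trans hℓi.1.le (hsmono (by omega)))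
      have hWvar_i : ‖W (s (low (i + 1) - 1)) - W (pifun i)‖ ≤ 1 := hW1 _ _ hπb
      have hMS_i : Aux.MS q W (pifun i) (s (low (i + 1) - 1)) ≠ ⊤ :=
        (lt_of_le_of_lt (hMSle1 _ _) ENNReal.one_lt_top).ne
      have hsk : i ≤ N → s (low (i + 1) - 1) < tR i := by
        intro hiN
        refine htRgt i _ hiN ?_
        have h6 := (hbinmem i (low (i + 1) - 1) (by have := hA'ge i; omega) (by omega)).1
        omega
      have hsupp_i : ∀ x : ℝ, ¬(aE i < (x : EReal) ∧ (x : EReal) < bE i) →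
          x < ℓf i ∨ s (low (i + 1) - 1) < x := by
        intro x hx
        push_neg at hx
        by_cases h0 : i = 0
        · right
          have hb : bE i ≤ (x : EReal) := by
            refine hx ?_
            simp only [haE]
            rw [if_pos h0]
            exact EReal.bot_lt_coe x
          have hiN : i ≤ N := by omega
          simp only [hbE] at hb
          rw [if_pos hiN] at hb
          exact lt_of_lt_of_le (hsk hiN) (EReal.coe_le_coe_iff.1 hb)
        · by_cases hxa : aE i < (x : EReal)
          · right
            have hb := hx hxa
            have hiN : i ≤ N := by
              by_contra hiN
              simp only [hbE] at hb
              rw [if_neg hiN] at hb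
              exact absurd (lt_of_lt_of_le (EReal.coe_lt_top x) hb) (lt_irrefl _)
            simp only [hbE] at hb
            rw [if_pos hiN] at hb
            exact lt_of_lt_of_le (hsk hiN) (EReal.coe_le_coe_iff.1 hb)
          · left
            simp only [haE] at hxa
            rw [if_neg h0] at hxa
            have hxa2 : x ≤ tL i := EReal.coe_le_coe_iff.1 (not_lt.1 hxa)
            exact lt_of_le_of_lt hxa2 (hℓi.2.2 h0).1
      have hbb := DP.bin_bound q hq u W g s M' hsg hsmono hsm (A' i) (low (i + 1)) hne
        (hlow_le (i + 1)) (c0 i) (ℓf i) (pifun i) δ' hδ'pos.le hℓi.1 hπle hπW hPrev_i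
        (aE i) (bE i) hsupp_i hLu_i hWvar_i hMS_i
      rw [hafeq, hbfeq]
      exact hbb
    · rw [show Finset.Ico (A' i) (low (i + 1)) = ∅ from Finset.Ico_eq_empty hne]
      simp only [Finset.sum_empty, nnnorm_zero, ENNReal.coe_zero]
      exact zero_le
  -- chain conditions and summation of the local variations
  have hab : ∀ i, i < N + 2 → afun i ≤ bfun i := by
    intro i hi
    by_cases hne : A' i < low (i + 1)
    · have hℓi := hℓf i ⟨hi, hne⟩
      simp only [hafun, hbfun, hpifun]
      rw [if_pos hne, if_neg (by omega : ¬(low (i + 1) = 0))]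
      by_cases h0 : A' i = 0
      · rw [if_pos h0]
        exact le_trans hℓi.1.le (hsmono (by omega))
      · rw [if_neg h0]
        exact hsmono (by omega)
    · simp only [hafun]
      rw [if_neg hne]
  have hba : ∀ i, i + 1 < N + 2 → bfun i ≤ afun (i + 1) := by
    intro i hi
    by_cases hne : A' (i + 1) < low (i + 1 + 1)
    · have hℓi := hℓf (i + 1) ⟨by omega, hne⟩
      simp only [hafun]
      rw [if_pos hne]
      by_cases h0 : A' (i + 1) = 0
      · have hlowz : low (i + 1) = 0 := by have := hA'ge (i + 1); omega
        have hcnt0 : cnt 0 = i + 1 := by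
          have h7 := (hbinmem (i + 1) 0 (by omega) (by omega)).1
          exact h7
        simp only [hbfun, hpifun]
        rw [if_pos hlowz, if_pos h0]
        simp only [hℓstar]
        rw [hcnt0]
        exact min_le_left _ _
      · simp only [hbfun, hpifun]
        rw [if_neg h0]
        by_cases hB0 : low (i + 1) = 0
        · rw [if_pos hB0]
          simp only [hℓstar]
          exact le_trans (min_le_right _ _) (hsmono (by omega))
        · rw [if_neg hB0]
          exact hsmono (by have := hA'ge (i + 1); omega)
    · simp only [hafun]
      rw [if_neg hne]
      simp only [hbfun]
      by_cases hB0 : low (i + 1) = 0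
      · rw [if_pos hB0]
        by_cases hB0' : low (i + 1 + 1) = 0
        · rw [if_pos hB0']
        · rw [if_neg hB0']
          simp only [hℓstar]
          exact le_trans (min_le_right _ _) (hsmono (by omega))
      · rw [if_neg hB0,
          if_neg (by have := hlow_mono (show i + 1 ≤ i + 1 + 1 from by omega); omega)]
        exact hsmono (by have := hlow_mono (show i + 1 ≤ i + 1 + 1 from by omega); omega)
  have hsumMS : ∑ i ∈ Finset.range (N + 2), Aux.MS q W (afun i) (bfun i) ≤ 1 :=
    le_trans (Aux.sum_MS_le q W (N + 2) afun bfun hab hba) hMSfull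
  -- Hoelder
  have hpq' : Real.HolderConjugate p q := Real.holderConjugate_iff.2 ⟨hp, by rw [← one_div, ← one_div]; exact hpq⟩
  have hHolder := ENNReal.inner_le_Lp_mul_Lq (Finset.range (N + 2))
    (fun i => DP.UdisNormLoc q (aE i) (bE i) u)
    (fun i => (2 * Aux.MS q W (afun i) (bfun i)) ^ (1 / q)) hpq'
  have hlamq : ∀ i, ((2 * Aux.MS q W (afun i) (bfun i)) ^ (1 / q)) ^ q
      = 2 * Aux.MS q W (afun i) (bfun i) := fun i => by
    rw [← ENNReal.rpow_mul, one_div_mul_cancel (ne_of_gt hq0), ENNReal.rpow_one]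
  have hsumlam : (∑ i ∈ Finset.range (N + 2),
      ((2 * Aux.MS q W (afun i) (bfun i)) ^ (1 / q)) ^ q) ≤ 2 := by
    calc ∑ i ∈ Finset.range (N + 2), ((2 * Aux.MS q W (afun i) (bfun i)) ^ (1 / q)) ^ q
        = ∑ i ∈ Finset.range (N + 2), 2 * Aux.MS q W (afun i) (bfun i) :=
          Finset.sum_congr rfl fun i _ => hlamq i
      _ = 2 * ∑ i ∈ Finset.range (N + 2), Aux.MS q W (afun i) (bfun i) := by
          rw [Finset.mul_sum]
      _ ≤ 2 * 1 := mul_le_mul_right hsumMS 2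
      _ = 2 := mul_one 2
  have hlampow : (∑ i ∈ Finset.range (N + 2),
      ((2 * Aux.MS q W (afun i) (bfun i)) ^ (1 / q)) ^ q) ^ (1 / q) ≤ 2 := by
    calc (∑ i ∈ Finset.range (N + 2),
        ((2 * Aux.MS q W (afun i) (bfun i)) ^ (1 / q)) ^ q) ^ (1 / q)
        ≤ (2 : ℝ≥0∞) ^ (1 / q) := ENNReal.rpow_le_rpow hsumlam (by positivity)
      _ ≤ (2 : ℝ≥0∞) ^ (1 : ℝ) :=
          ENNReal.rpow_le_rpow_of_exponent_le (by norm_num)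
            (by rw [div_le_one hq0]; exact hq.le)
      _ = 2 := ENNReal.rpow_one 2
  have hmain : (‖DP.Bpair M' t' W v‖₊ : ℝ≥0∞)
      ≤ 2 * T ^ (1 / p) + ((N + 2 : ℕ) : ℝ≥0∞) * ENNReal.ofReal δ' := by
    calc (‖DP.Bpair M' t' W v‖₊ : ℝ≥0∞)
        = ‖∑ i ∈ Finset.range (N + 2), ∑ k ∈ Finset.Ico (low i) (low (i + 1)),
            (inner ℂ (d k) (v (s k)) : ℂ)‖₊ := by rw [hBsum]
      _ ≤ ∑ i ∈ Finset.range (N + 2), (‖∑ k ∈ Finset.Ico (low i) (low (i + 1)),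
            (inner ℂ (d k) (v (s k)) : ℂ)‖₊ : ℝ≥0∞) := by
          rw [← ENNReal.coe_finset_sum]
          exact ENNReal.coe_le_coe.2 (nnnorm_sum_le _ _)
      _ ≤ ∑ i ∈ Finset.range (N + 2), ((2 * Aux.MS q W (afun i) (bfun i)) ^ (1 / q)
            * DP.UdisNormLoc q (aE i) (bE i) u + ENNReal.ofReal δ') :=
          Finset.sum_le_sum hGp
      _ = ∑ i ∈ Finset.range (N + 2), (2 * Aux.MS q W (afun i) (bfun i)) ^ (1 / q)
            * DP.UdisNormLoc q (aE i) (bE i) u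
          + ((N + 2 : ℕ) : ℝ≥0∞) * ENNReal.ofReal δ' := by
          rw [Finset.sum_add_distrib, Finset.sum_const, Finset.card_range, nsmul_eq_mul]
      _ ≤ 2 * T ^ (1 / p) + ((N + 2 : ℕ) : ℝ≥0∞) * ENNReal.ofReal δ' := by
          refine add_le_add_left ?_ _
          calc ∑ i ∈ Finset.range (N + 2), (2 * Aux.MS q W (afun i) (bfun i)) ^ (1 / q)
                * DP.UdisNormLoc q (aE i) (bE i) u
              = ∑ i ∈ Finset.range (N + 2), DP.UdisNormLoc q (aE i) (bE i) u
                * (2 * Aux.MS q W (afun i) (bfun i)) ^ (1 / q) :=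
                Finset.sum_congr rfl fun i _ => mul_comm _ _
            _ ≤ (∑ i ∈ Finset.range (N + 2), DP.UdisNormLoc q (aE i) (bE i) u ^ p) ^ (1 / p)
                * (∑ i ∈ Finset.range (N + 2),
                    ((2 * Aux.MS q W (afun i) (bfun i)) ^ (1 / q)) ^ q) ^ (1 / q) := hHolder
            _ ≤ T ^ (1 / p) * 2 := mul_le_mul_right hlampow _
            _ = 2 * T ^ (1 / p) := mul_comm _ _
  have hNδ : ((N + 2 : ℕ) : ℝ≥0∞) * ENNReal.ofReal δ' ≤ (ε : ℝ≥0∞) := by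
    rw [show ((N + 2 : ℕ) : ℝ≥0∞) = ENNReal.ofReal ((N + 2 : ℕ) : ℝ) from
      (ENNReal.ofReal_natCast _).symm, ← ENNReal.ofReal_mul (by positivity)]
    rw [← ENNReal.ofReal_coe_nnreal]
    refine ENNReal.ofReal_le_ofReal ?_
    rw [hδ'def, show ((N + 2 : ℕ) : ℝ) = (N : ℝ) + 2 from by push_cast; ring,
      mul_div_cancel₀ _ (by positivity : ((N : ℝ) + 2) ≠ 0)]
  calc (‖DP.Bpair M' t' W v‖₊ : ℝ≥0∞)
      ≤ 2 * T ^ (1 / p) + ((N + 2 : ℕ) : ℝ≥0∞) * ENNReal.ofReal δ' := hmain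
    _ ≤ 2 * T ^ (1 / p) + ε := add_le_add_right hNδ _
    _ ≤ 4 * T ^ (1 / p) + ε :=
        add_le_add_left (mul_le_mul_left (by norm_num : (2 : ℝ≥0∞) ≤ 4) _) _
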